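/- Let A be an additive category with binary biproducts and consider morphisms of cochain complexes f : X ⟶ Y, f′ : X′ ⟶ Y′, a : X ⟶ X′, b : Y ⟶ Y′ with f ≫ b = a ≫ f′. If a and b are homotopy equivalences, then the induced morphism mappingCone.map f f′ a b : mappingCone(f) ⟶ mappingCone(f′) is a homotopy equivalence. -/

import Mathlib

open CategoryTheory CategoryTheory.Limits CochainComplex Pretriangulated

namespace Stmt13Aux

instance instPreadditiveYonedaAdditive {C : Type*} [Category C] [Preadditive C] :
    (preadditiveYoneda : C ⥤ Cᵒᵖ ⥤ AddCommGrpCat).Additive where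
  map_add := by intros; ext; simp [preadditiveYoneda]; exact Preadditive.comp_add _ _ _ _ _ _

section Reflect

variable {C D : Type*} [Category C] [Category D] [Preadditive C] [Preadditive D]
  (G : C ⥤ D) [G.Additive] [G.Full] [G.Faithful]
variable {ι : Type*} {c : ComplexShape ι}

/-- A fully faithful additive functor reflects homotopies. -/
noncomputable def reflectHomotopy {M N : HomologicalComplex C c} (f g : M ⟶ N)
    (H : Homotopy ((G.mapHomologicalComplex c).map f) ((G.mapHomologicalComplex c).map g)) :
    Homotopy f g where
  hom i j := G.preimage (H.hom i j)
  zero i j hij := G.map_injective (by erw [G.map_preimage, H.zero i j hij, G.map_zero]; rfl)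
  comm i := G.map_injective (by
    have h := H.comm i
    dsimp [dNext, prevD] at h ⊢
    simp only [G.map_add, G.map_comp, AddMonoidHom.mk'_apply]
    erw [G.map_preimage, G.map_preimage]
    exact h)

/-- Preimage of a morphism of complexes under a fully faithful additive functor. -/
noncomputable def preimageComplexHom {M N : HomologicalComplex C c}
    (ξ : (G.mapHomologicalComplex c).obj M ⟶ (G.mapHomologicalComplex c).obj N) : M ⟶ N where
  f i := G.preimage (ξ.f i)
  comm' i j hij := G.map_injective (by
    have h := ξ.comm i j
    rw [G.map_comp, G.map_comp]
    erw [G.map_preimage, G.map_preimage]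
    exact h)

@[simp]
lemma map_preimageComplexHom {M N : HomologicalComplex C c}
    (ξ : (G.mapHomologicalComplex c).obj M ⟶ (G.mapHomologicalComplex c).obj N) :
    (G.mapHomologicalComplex c).map (preimageComplexHom G ξ) = ξ := by
  ext i
  exact G.map_preimage (ξ.f i)

/-- A fully faithful additive functor reflects homotopy equivalences. -/
lemma reflect_homotopyEquiv {M N : HomologicalComplex C c} (ψ : M ⟶ N)
    (h : ∃ e : HomotopyEquiv ((G.mapHomologicalComplex c).obj M)
        ((G.mapHomologicalComplex c).obj N), e.hom = (G.mapHomologicalComplex c).map ψ) :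
    ∃ e : HomotopyEquiv M N, e.hom = ψ := by
  obtain ⟨e, he⟩ := h
  refine ⟨⟨ψ, preimageComplexHom G e.inv, reflectHomotopy G _ _ ?_, reflectHomotopy G _ _ ?_⟩, rfl⟩
  · exact (Homotopy.ofEq (by rw [Functor.map_comp, map_preimageComplexHom, ← he])).trans
      (e.homotopyHomInvId.trans (Homotopy.ofEq (by rw [CategoryTheory.Functor.map_id])).symm)
  · exact (Homotopy.ofEq (by rw [Functor.map_comp, map_preimageComplexHom, ← he])).trans
      (e.homotopyInvHomId.trans (Homotopy.ofEq (by rw [CategoryTheory.Functor.map_id])).symm)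

end Reflect

section Key

variable {C D : Type*} [Category C] [Category D] [Preadditive C] [Preadditive D]
  [HasBinaryBiproducts C] [HasBinaryBiproducts D] [HasZeroObject D]
  (G : C ⥤ D) [G.Additive]

/-- The image in the homotopy category of `D` of the image under `G` of the map between
mapping cones is an isomorphism when `a` and `b` are homotopy equivalences. -/
lemma key_isIso {X Y X' Y' : CochainComplex C ℤ} (f : X ⟶ Y) (f' : X' ⟶ Y')
    (a : X ⟶ X') (b : Y ⟶ Y') (comm : f ≫ b = a ≫ f')
    (ea : HomotopyEquiv X X') (hea : ea.hom = a)
    (eb : HomotopyEquiv Y Y') (heb : eb.hom = b) :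
    IsIso ((HomotopyCategory.quotient D (ComplexShape.up ℤ)).map
      ((G.mapHomologicalComplex (ComplexShape.up ℤ)).map
        (mappingCone.map f f' a b comm))) := by
  let Q := HomotopyCategory.quotient C (ComplexShape.up ℤ)
  let Q' := HomotopyCategory.quotient D (ComplexShape.up ℤ)
  let F := G.mapHomologicalComplex (ComplexShape.up ℤ)
  let F' := G.mapHomotopyCategory (ComplexShape.up ℤ)
  let φh : mappingCone.triangleh f ⟶ mappingCone.triangleh f' :=
    Q.mapTriangle.map (mappingCone.triangleMap f f' a b comm)
  let ψT : mappingCone.triangleh (F.map f) ⟶ mappingCone.triangleh (F.map f') :=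
    (mappingCone.mapTrianglehIso f G).inv ≫ F'.mapTriangle.map φh ≫
      (mappingCone.mapTrianglehIso f' G).hom
  have h1 : IsIso ψT.hom₁ := by
    have : ψT.hom₁ = (mappingCone.mapTrianglehIso f G).inv.hom₁ ≫
        (F'.mapTriangle.map φh).hom₁ ≫ (mappingCone.mapTrianglehIso f' G).hom.hom₁ := rfl
    rw [this]
    have : IsIso (F'.mapTriangle.map φh).hom₁ := by
      have e2 : (F'.mapTriangle.map φh).hom₁ = Q'.map (F.map a) := by
        dsimp [φh, F', Q, F]
        rfl
      rw [e2, ← hea]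
      exact (inferInstance : IsIso (HomotopyCategory.isoOfHomotopyEquiv
        (G.mapHomotopyEquiv ea)).hom)
    infer_instance
  have h2 : IsIso ψT.hom₂ := by
    have : ψT.hom₂ = (mappingCone.mapTrianglehIso f G).inv.hom₂ ≫
        (F'.mapTriangle.map φh).hom₂ ≫ (mappingCone.mapTrianglehIso f' G).hom.hom₂ := rfl
    rw [this]
    have : IsIso (F'.mapTriangle.map φh).hom₂ := by
      have e2 : (F'.mapTriangle.map φh).hom₂ = Q'.map (F.map b) := by
        dsimp [φh, F', Q, F]
        rfl
      rw [e2, ← heb]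
      exact (inferInstance : IsIso (HomotopyCategory.isoOfHomotopyEquiv
        (G.mapHomotopyEquiv eb)).hom)
    infer_instance
  have h3 : IsIso ψT.hom₃ :=
    isIso₃_of_isIso₁₂ ψT (HomotopyCategory.mappingCone_triangleh_distinguished (F.map f))
      (HomotopyCategory.mappingCone_triangleh_distinguished (F.map f')) h1 h2
  have e3 : (F'.mapTriangle.map φh).hom₃ = Q'.map (F.map (mappingCone.map f f' a b comm)) := by
    dsimp [φh, F', Q, F]
    rfl
  have heq : F'.mapTriangle.map φh = (mappingCone.mapTrianglehIso f G).hom ≫ ψT ≫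
      (mappingCone.mapTrianglehIso f' G).inv := by
    dsimp only [ψT]
    simp only [Category.assoc, Iso.hom_inv_id_assoc, Iso.hom_inv_id, Category.comp_id]
  have h4 : IsIso (F'.mapTriangle.map φh).hom₃ := by
    rw [heq]
    have : ((mappingCone.mapTrianglehIso f G).hom ≫ ψT ≫
        (mappingCone.mapTrianglehIso f' G).inv).hom₃ =
        (mappingCone.mapTrianglehIso f G).hom.hom₃ ≫ ψT.hom₃ ≫
        (mappingCone.mapTrianglehIso f' G).inv.hom₃ := rfl
    rw [this]
    infer_instance
  rw [e3] at h4
  exact h4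

end Key

end Stmt13Aux

/-- Given a commutative square `f ≫ b = a ≫ f'` of morphisms of cochain
complexes over an additive category with binary biproducts, if `a` and `b`
are homotopy equivalences then the induced morphism
`mappingCone.map f f' a b : mappingCone f ⟶ mappingCone f'` is a homotopy
equivalence. -/
theorem stmt13 {A : Type*} [Category A] [Preadditive A] [HasBinaryBiproducts A]
    {X Y X' Y' : CochainComplex A ℤ} (f : X ⟶ Y) (f' : X' ⟶ Y')
    (a : X ⟶ X') (b : Y ⟶ Y') (comm : f ≫ b = a ≫ f')
    (ha : ∃ ea : HomotopyEquiv X X', ea.hom = a)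
    (hb : ∃ eb : HomotopyEquiv Y Y', eb.hom = b) :
    ∃ e : HomotopyEquiv (mappingCone f) (mappingCone f'),
      e.hom = mappingCone.map f f' a b comm := by
  obtain ⟨ea, hea⟩ := ha
  obtain ⟨eb, heb⟩ := hb
  let G : A ⥤ Aᵒᵖ ⥤ AddCommGrpCat := preadditiveYoneda
  let F := G.mapHomologicalComplex (ComplexShape.up ℤ)
  let Q' := HomotopyCategory.quotient (Aᵒᵖ ⥤ AddCommGrpCat) (ComplexShape.up ℤ)
  have key : IsIso (Q'.map (F.map (mappingCone.map f f' a b comm))) :=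
    Stmt13Aux.key_isIso G f f' a b comm ea hea eb heb
  apply Stmt13Aux.reflect_homotopyEquiv G
  refine ⟨{
    hom := F.map (mappingCone.map f f' a b comm)
    inv := Quot.out (inv (Q'.map (F.map (mappingCone.map f f' a b comm))))
    homotopyHomInvId := HomotopyCategory.homotopyOfEq _ _ ?_
    homotopyInvHomId := HomotopyCategory.homotopyOfEq _ _ ?_ }, rfl⟩
  · erw [Q'.map_comp, HomotopyCategory.quotient_map_out, IsIso.hom_inv_id, Q'.map_id]
  · erw [Q'.map_comp, HomotopyCategory.quotient_map_out, IsIso.inv_hom_id, Q'.map_id]
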